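/- Let κ ≥ 3 be a cardinal and let α ≥ 1 be a countable ordinal. Given a₁, a₂, b₁, b₂ ∈ T_κ^{[α]} with d(a₁, a₂) = d(b₁, b₂), there exists an isometry ψ of T_κ^{[α]} such that ψ(a₁) = b₁ and ψ(a₂) = b₂. In particular, T_κ^{[α]} is homogeneous. -/

import Mathlib

open Set Filter

noncomputable section

/-- `C` is a valid label set for the valence cardinal `κ`:
`|C| = κ` if `κ` is infinite and `|C| + 1 = κ` (i.e. `|C| = κ - 1`) if `κ` is finite. -/
def IsLabelSet (κ : Cardinal) (C : Type) : Prop :=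
  (Cardinal.aleph0 ≤ κ → Cardinal.mk C = κ) ∧ (κ < Cardinal.aleph0 → Cardinal.mk C + 1 = κ)

/-- An ordinal is countable. -/
def IsCountableOrdinal (o : Ordinal) : Prop := o.card ≤ Cardinal.aleph0

/-- One-step Cantor–Bendixson derivative of a set: its non-isolated points. -/
def cbStep {X : Type*} [TopologicalSpace X] (A : Set X) : Set X :=
  {x | x ∈ A ∧ AccPt x (Filter.principal A)}

/-- The iterated Cantor–Bendixson derivative of a set. -/
def cbDeriv {X : Type*} [TopologicalSpace X] (A : Set X) (o : Ordinal) : Set X :=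
  Ordinal.limitRecOn o A (fun _ ih => cbStep ih)
    (fun o _ ih => ⋂ (o' : Ordinal) (h : o' < o), ih o' h)

/-- The Cantor–Bendixson rank of a set: the least ordinal `γ` such that the `(γ+1)`-st
Cantor–Bendixson derivative equals the `γ`-th one. -/
def cbRank {X : Type*} [TopologicalSpace X] (A : Set X) : Ordinal :=
  sInf {γ | cbDeriv A (γ + 1) = cbDeriv A γ}

theorem cbDeriv_zero {X : Type*} [TopologicalSpace X] (A : Set X) : cbDeriv A 0 = A :=
  Ordinal.limitRecOn_zero ..

theorem cbDeriv_one {X : Type*} [TopologicalSpace X] (A : Set X) :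
    cbDeriv A 1 = cbStep A := by
  have : (1 : Ordinal) = Order.succ 0 := by
    rw [← Ordinal.add_one_eq_succ, zero_add]
  rw [cbDeriv, this, Ordinal.limitRecOn_succ]
  rw [← cbDeriv, cbDeriv_zero]

theorem cbStep_empty {X : Type*} [TopologicalSpace X] : cbStep (∅ : Set X) = ∅ := by
  ext x; simp [cbStep]

theorem cbRank_empty {X : Type*} [TopologicalSpace X] : cbRank (∅ : Set X) = 0 := by
  refine le_antisymm ?_ zero_le
  refine csInf_le' ?_
  show cbDeriv (∅ : Set X) (0 + 1) = cbDeriv (∅ : Set X) 0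
  rw [zero_add, cbDeriv_one, cbDeriv_zero, cbStep_empty]

/-- A point of Dyubina's universal real tree over the label set `C` (with distinguished label
`z`): a function `(-∞, ρ) → C`, encoded as a total function on `ℝ` which takes the value `z`
on `[ρ, ∞)`, which is eventually `z` near `-∞` and piecewise constant from the right. -/
structure UTree (C : Type) (z : C) where
  ρ : ℝ
  f : ℝ → C
  apply_eq_of_ge : ∀ t, ρ ≤ t → f t = z
  eventually_zero : ∃ s, s ≤ ρ ∧ ∀ t, t < s → f t = z
  piecewise_const : ∀ t, t < ρ → ∃ ε > 0, ∀ u, t ≤ u → u ≤ t + ε → u < ρ → f u = f t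

namespace UTree

variable {C : Type} {z : C}

theorem ext' {a b : UTree C z} (h1 : a.ρ = b.ρ) (h2 : a.f = b.f) : a = b := by
  cases a; cases b; cases h1; cases h2; rfl

/-- The partial order `⪯` : `a ⪯ b` iff `a` is the restriction of `b` to `(-∞, ρ_a)`. -/
protected def le (a b : UTree C z) : Prop :=
  a.ρ ≤ b.ρ ∧ ∀ t, t < a.ρ → a.f t = b.f t

/-- The strict order `≺`. -/
protected def lt (a b : UTree C z) : Prop := a.le b ∧ a ≠ b

/-- The set of times up to which `a` and `b` agree. -/
def agreeSet (a b : UTree C z) : Set ℝ :=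
  {t | t ≤ min a.ρ b.ρ ∧ ∀ u, u < t → a.f u = b.f u}

theorem agreeSet_nonempty (a b : UTree C z) : (agreeSet a b).Nonempty := by
  obtain ⟨s₁, hs₁, h₁⟩ := a.eventually_zero
  obtain ⟨s₂, hs₂, h₂⟩ := b.eventually_zero
  refine ⟨min s₁ s₂, le_min ((min_le_left _ _).trans hs₁) ((min_le_right _ _).trans hs₂), ?_⟩
  intro u hu
  rw [h₁ u (lt_of_lt_of_le hu (min_le_left _ _)), h₂ u (lt_of_lt_of_le hu (min_le_right _ _))]

theorem agreeSet_bddAbove (a b : UTree C z) : BddAbove (agreeSet a b) :=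
  ⟨min a.ρ b.ρ, fun _ ht => ht.1⟩

/-- `ρ_{a ∧ b}`, the height of the wedge of `a` and `b`. -/
def wedgeρ (a b : UTree C z) : ℝ := sSup (agreeSet a b)

theorem wedgeρ_le_min (a b : UTree C z) : wedgeρ a b ≤ min a.ρ b.ρ :=
  csSup_le (agreeSet_nonempty a b) fun _ ht => ht.1

theorem agree_of_lt_wedgeρ (a b : UTree C z) {u : ℝ} (hu : u < wedgeρ a b) :
    a.f u = b.f u := by
  obtain ⟨t, ht, hut⟩ := exists_lt_of_lt_csSup (agreeSet_nonempty a b) hu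
  exact ht.2 u hut

theorem le_wedgeρ {a b : UTree C z} {t : ℝ} (ht : t ∈ agreeSet a b) : t ≤ wedgeρ a b :=
  le_csSup (agreeSet_bddAbove a b) ht

theorem wedgeρ_comm (a b : UTree C z) : wedgeρ a b = wedgeρ b a := by
  unfold wedgeρ agreeSet
  congr 1
  ext t
  constructor <;> rintro ⟨h1, h2⟩ <;>
    exact ⟨by rwa [min_comm], fun u hu => (h2 u hu).symm⟩

theorem wedgeρ_self (a : UTree C z) : wedgeρ a a = a.ρ := by
  refine le_antisymm ((wedgeρ_le_min a a).trans (by simp)) ?_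
  exact le_wedgeρ ⟨by simp, fun _ _ => rfl⟩

/-- Restriction of `a` to `(-∞, s)` for `s ≤ ρ_a`. -/
def restrict (a : UTree C z) (s : ℝ) (hs : s ≤ a.ρ) : UTree C z where
  ρ := s
  f := fun t => if t < s then a.f t else z
  apply_eq_of_ge := fun t ht => by
    show (if t < s then a.f t else z) = z
    rw [if_neg (not_lt.mpr ht)]
  eventually_zero := by
    obtain ⟨s', hs', h'⟩ := a.eventually_zero
    refine ⟨min s' s, min_le_right _ _, fun t ht => ?_⟩
    show (if t < s then a.f t else z) = z
    by_cases h : t < s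
    · rw [if_pos h]; exact h' t (lt_of_lt_of_le ht (min_le_left _ _))
    · rw [if_neg h]
  piecewise_const := fun t ht => by
    obtain ⟨ε, hε, h⟩ := a.piecewise_const t (lt_of_lt_of_le ht hs)
    refine ⟨ε, hε, fun u hu1 hu2 hu3 => ?_⟩
    show (if u < s then a.f u else z) = (if t < s then a.f t else z)
    rw [if_pos hu3, if_pos ht]
    exact h u hu1 hu2 (lt_of_lt_of_le hu3 hs)

/-- The wedge `a ∧ b`: the restriction of `a` to `(-∞, ρ_{a ∧ b})`. -/
def wedge (a b : UTree C z) : UTree C z :=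
  a.restrict (wedgeρ a b) ((wedgeρ_le_min a b).trans (min_le_left _ _))

theorem min_wedgeρ_le (a b c : UTree C z) :
    min (wedgeρ a b) (wedgeρ b c) ≤ wedgeρ a c := by
  refine le_wedgeρ ⟨le_min ?_ ?_, fun u hu => ?_⟩
  · exact (min_le_left _ _).trans ((wedgeρ_le_min a b).trans (min_le_left _ _))
  · exact (min_le_right _ _).trans ((wedgeρ_le_min b c).trans (min_le_right _ _))
  · have h1 : a.f u = b.f u :=
      agree_of_lt_wedgeρ a b (lt_of_lt_of_le hu (min_le_left _ _))
    have h2 : b.f u = c.f u :=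
      agree_of_lt_wedgeρ b c (lt_of_lt_of_le hu (min_le_right _ _))
    exact h1.trans h2

/-- The metric `d(a,b) = ρ_a + ρ_b - 2 ρ_{a ∧ b}` on the universal real tree. -/
instance : MetricSpace (UTree C z) where
  dist a b := a.ρ + b.ρ - 2 * wedgeρ a b
  dist_self a := by simp [wedgeρ_self]; ring
  dist_comm a b := by simp only [wedgeρ_comm a b]; ring
  dist_triangle a b c := by
    have hmin := min_wedgeρ_le a b c
    have h1 : wedgeρ a b ≤ b.ρ := (wedgeρ_le_min a b).trans (min_le_right _ _)
    have h2 : wedgeρ b c ≤ b.ρ := (wedgeρ_le_min b c).trans (min_le_left _ _)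
    rcases min_cases (wedgeρ a b) (wedgeρ b c) with ⟨heq, hle⟩ | ⟨heq, hle⟩ <;>
      (rw [heq] at hmin; (try dsimp); linarith)
  eq_of_dist_eq_zero := by
    intro a b h
    have h1 : wedgeρ a b ≤ a.ρ := (wedgeρ_le_min a b).trans (min_le_left _ _)
    have h2 : wedgeρ a b ≤ b.ρ := (wedgeρ_le_min a b).trans (min_le_right _ _)
    have hd : a.ρ + b.ρ - 2 * wedgeρ a b = 0 := h
    have ha : a.ρ = wedgeρ a b := by linarith
    have hb : b.ρ = wedgeρ a b := by linarith
    refine ext' (ha.trans hb.symm) (funext fun t => ?_)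
    by_cases ht : t < wedgeρ a b
    · exact agree_of_lt_wedgeρ a b ht
    · rw [a.apply_eq_of_ge t (ha.le.trans (not_lt.mp ht)),
        b.apply_eq_of_ge t (hb.le.trans (not_lt.mp ht))]

theorem dist_def (a b : UTree C z) : dist a b = a.ρ + b.ρ - 2 * wedgeρ a b := rfl

/-- The point `c_ℓ`: the constant function `(-∞, ℓ) → C` with value `z`. -/
def cconst (ℓ : ℝ) : UTree C z where
  ρ := ℓ
  f := fun _ => z
  apply_eq_of_ge := fun _ _ => rfl
  eventually_zero := ⟨ℓ, le_refl ℓ, fun _ _ => rfl⟩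
  piecewise_const := fun _ _ => ⟨1, one_pos, fun _ _ _ _ => rfl⟩

/-- The set of points at which `a` is locally non-constant from the left, whose closure is the
set `P_a`. -/
def badSet (a : UTree C z) : Set ℝ :=
  {t | t < a.ρ ∧ ∀ ε > 0, ∃ u ∈ Icc (t - ε) t, ∃ v ∈ Icc (t - ε) t, a.f u ≠ a.f v}

/-- The set `P_a`. -/
def Pset (a : UTree C z) : Set ℝ := closure (badSet a)

/-- The complexity of `a`: the Cantor–Bendixson rank of `P_a`. -/
def comp (a : UTree C z) : Ordinal := cbRank (Pset a)

/-- The complexity of a pair `a ≺ b`: the Cantor–Bendixson rank of `P_b ∩ [ρ_a, ρ_b]`. -/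
def pairComp (a b : UTree C z) : Ordinal := cbRank (Pset b ∩ Icc a.ρ b.ρ)

/-- `τ_a`: the maximum of all `s ≤ ρ_a` such that `a` is `z` below `s`. -/
def tau (a : UTree C z) : ℝ := sSup {s | s ≤ a.ρ ∧ ∀ t, t < s → a.f t = z}

/-- The tree `T_κ^{[α]}` of points of complexity at most `α`. -/
def level (z : C) (α : Ordinal) : Set (UTree C z) := {a | comp a ≤ α}

theorem Pset_cconst (ℓ : ℝ) : Pset (cconst ℓ : UTree C z) = ∅ := by
  have : badSet (cconst ℓ : UTree C z) = ∅ := by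
    ext t
    simp only [badSet, mem_setOf_eq, mem_empty_iff_false, iff_false, not_and]
    intro _
    push_neg
    exact ⟨1, one_pos, fun u _ v _ => rfl⟩
  rw [Pset, this, closure_empty]

theorem comp_cconst (ℓ : ℝ) : comp (cconst ℓ : UTree C z) = 0 := by
  rw [comp, Pset_cconst, cbRank_empty]

theorem cconst_mem_level {ℓ : ℝ} (α : Ordinal) : (cconst ℓ : UTree C z) ∈ level z α := by
  show comp _ ≤ α
  rw [comp_cconst]
  exact zero_le

/-- The canonical line `L_0 = {c_ℓ : ℓ ∈ ℝ}`. -/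
def L0 (z : C) : Set (UTree C z) := Set.range fun ℓ => (cconst ℓ : UTree C z)

/-- The extension of `a` by the label `c` on `[ρ_a, ρ_a + 1)`. -/
def extend (a : UTree C z) (c : C) : UTree C z where
  ρ := a.ρ + 1
  f := fun t => if t < a.ρ then a.f t else if t < a.ρ + 1 then c else z
  apply_eq_of_ge := fun t ht => by
    show (if t < a.ρ then a.f t else if t < a.ρ + 1 then c else z) = z
    rw [if_neg (not_lt.mpr (by linarith)), if_neg (not_lt.mpr ht)]
  eventually_zero := by
    obtain ⟨s, hs, h⟩ := a.eventually_zero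
    refine ⟨min s a.ρ, by have := min_le_right s a.ρ; linarith, fun t ht => ?_⟩
    show (if t < a.ρ then a.f t else if t < a.ρ + 1 then c else z) = z
    rw [if_pos (lt_of_lt_of_le ht (min_le_right _ _))]
    exact h t (lt_of_lt_of_le ht (min_le_left _ _))
  piecewise_const := by
    intro t ht
    by_cases htρ : t < a.ρ
    · obtain ⟨ε, hε, h⟩ := a.piecewise_const t htρ
      refine ⟨min ε ((a.ρ - t) / 2), lt_min hε (by linarith), fun u hu1 hu2 _ => ?_⟩
      have hu3 : u < a.ρ := by
        have := hu2.trans (add_le_add (le_refl t) (min_le_right _ _))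
        linarith
      show (if u < a.ρ then a.f u else if u < a.ρ + 1 then c else z) =
        (if t < a.ρ then a.f t else if t < a.ρ + 1 then c else z)
      rw [if_pos hu3, if_pos htρ]
      exact h u hu1 (hu2.trans (add_le_add (le_refl t) (min_le_left _ _))) hu3
    · refine ⟨(a.ρ + 1 - t) / 2, by linarith, fun u hu1 hu2 _ => ?_⟩
      have h1 : ¬u < a.ρ := by push_neg at htρ ⊢; linarith
      have h2 : u < a.ρ + 1 := by linarith
      show (if u < a.ρ then a.f u else if u < a.ρ + 1 then c else z) =
        (if t < a.ρ then a.f t else if t < a.ρ + 1 then c else z)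
      rw [if_neg h1, if_pos h2, if_neg htρ, if_pos ht]

end UTree

/-- A subset of a metric space is (geodesically) convex if it contains every point
metrically between two of its points. -/
def MetricConvex {X : Type*} [MetricSpace X] (S : Set X) : Prop :=
  ∀ x ∈ S, ∀ y ∈ S, ∀ w, dist x w + dist w y = dist x y → w ∈ S

/-- `D` is a direction at `x`: a connected component of the complement of `{x}`. -/
def IsDirectionAt {X : Type*} [TopologicalSpace X] (x : X) (D : Set X) : Prop :=
  ∃ y, y ≠ x ∧ D = connectedComponentIn {w | w ≠ x} y

/-- The valence of a space at a point: the number of connected components of the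
complement of that point. -/
def valenceAt {X : Type*} [TopologicalSpace X] (x : X) : Cardinal :=
  Cardinal.mk {D : Set X // IsDirectionAt x D}

/-- A real tree: a geodesic metric space in which any two points are joined by a unique arc. -/
def IsRealTree (X : Type*) [MetricSpace X] : Prop :=
  (∀ x y : X, ∃ γ : ℝ → X, γ 0 = x ∧ γ (dist x y) = y ∧
      ∀ s ∈ Icc (0 : ℝ) (dist x y), ∀ t ∈ Icc (0 : ℝ) (dist x y),
        dist (γ s) (γ t) = |s - t|) ∧
  (∀ (x y : X) (γ₁ γ₂ : Path x y), Function.Injective γ₁ → Function.Injective γ₂ →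
      Set.range γ₁ = Set.range γ₂)

section CBlemmas

open Ordinal in
theorem cbDeriv_osucc {X : Type*} [TopologicalSpace X] (A : Set X) (o : Ordinal) :
    cbDeriv A (Order.succ o) = cbStep (cbDeriv A o) := by
  rw [cbDeriv, Ordinal.limitRecOn_succ]
  rfl

theorem cbDeriv_succ' {X : Type*} [TopologicalSpace X] (A : Set X) (o : Ordinal) :
    cbDeriv A (o + 1) = cbStep (cbDeriv A o) := by
  rw [Ordinal.add_one_eq_succ, cbDeriv_osucc]

theorem cbDeriv_limit' {X : Type*} [TopologicalSpace X] (A : Set X) {o : Ordinal}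
    (ho : Order.IsSuccLimit o) :
    cbDeriv A o = ⋂ (o' : Ordinal) (_ : o' < o), cbDeriv A o' := by
  rw [cbDeriv, Ordinal.limitRecOn_limit _ _ _ _ ho]
  rfl

theorem cbStep_subset {X : Type*} [TopologicalSpace X] (A : Set X) : cbStep A ⊆ A :=
  fun _ hx => hx.1

theorem cbStep_mono {X : Type*} [TopologicalSpace X] {A B : Set X} (h : A ⊆ B) :
    cbStep A ⊆ cbStep B := by
  rintro x ⟨hxA, hacc⟩
  exact ⟨h hxA, hacc.mono (Filter.principal_mono.2 h)⟩

theorem cbDeriv_mono {X : Type*} [TopologicalSpace X] {A B : Set X} (h : A ⊆ B) :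
    ∀ o : Ordinal, cbDeriv A o ⊆ cbDeriv B o := by
  intro o
  induction o using Ordinal.limitRecOn with
  | zero => rw [cbDeriv_zero, cbDeriv_zero]; exact h
  | add_one o ih => rw [cbDeriv_succ', cbDeriv_succ']; exact cbStep_mono ih
  | limit o ho ih =>
      rw [cbDeriv_limit' _ ho, cbDeriv_limit' _ ho]
      exact Set.iInter₂_mono fun o' h' => ih o' h'

theorem cbDeriv_anti {X : Type*} [TopologicalSpace X] (A : Set X) :
    ∀ {o₁ o₂ : Ordinal}, o₁ ≤ o₂ → cbDeriv A o₂ ⊆ cbDeriv A o₁ := by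
  intro o₁ o₂
  induction o₂ using Ordinal.limitRecOn with
  | zero => intro h; rw [nonpos_iff_eq_zero.1 h]
  | add_one o ih =>
      intro h
      rcases eq_or_lt_of_le h with rfl | hlt
      · rfl
      · have h1 : o₁ ≤ o := Order.le_of_lt_succ hlt
        rw [cbDeriv_succ']
        exact (cbStep_subset _).trans (ih h1)
  | limit o ho ih =>
      intro h
      rcases eq_or_lt_of_le h with rfl | hlt
      · rfl
      · rw [cbDeriv_limit' _ ho]
        exact Set.iInter₂_subset o₁ hlt

theorem cbDeriv_isClosed {X : Type*} [TopologicalSpace X] [T1Space X] {A : Set X}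
    (hA : IsClosed A) : ∀ o : Ordinal, IsClosed (cbDeriv A o) := by
  intro o
  induction o using Ordinal.limitRecOn with
  | zero => rwa [cbDeriv_zero]
  | add_one o ih =>
      rw [cbDeriv_succ']
      have : cbStep (cbDeriv A o) = cbDeriv A o ∩ derivedSet (cbDeriv A o) := rfl
      rw [this]
      exact ih.inter (isClosed_derivedSet _)
  | limit o ho ih =>
      rw [cbDeriv_limit' _ ho]
      exact isClosed_iInter fun o' => isClosed_iInter fun h' => ih o' h'

theorem accPt_mem_of_isClosed {X : Type*} [TopologicalSpace X] {A : Set X} {x : X}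
    (h : AccPt x (Filter.principal A)) (hA : IsClosed A) : x ∈ A :=
  hA.closure_subset_iff.2 (subset_refl A) (derivedSet_subset_closure A h)

theorem cbStep_union_subset {X : Type*} [TopologicalSpace X] {A B : Set X}
    (hA : IsClosed A) (hB : IsClosed B) : cbStep (A ∪ B) ⊆ cbStep A ∪ cbStep B := by
  rintro x ⟨hx, hacc⟩
  rw [← sup_principal, accPt_sup] at hacc
  rcases hacc with h | h
  · exact Or.inl ⟨accPt_mem_of_isClosed h hA, h⟩
  · exact Or.inr ⟨accPt_mem_of_isClosed h hB, h⟩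

theorem cbDeriv_union_subset {X : Type*} [TopologicalSpace X] [T1Space X] {A B : Set X}
    (hA : IsClosed A) (hB : IsClosed B) :
    ∀ o : Ordinal, cbDeriv (A ∪ B) o ⊆ cbDeriv A o ∪ cbDeriv B o := by
  intro o
  induction o using Ordinal.limitRecOn with
  | zero => rw [cbDeriv_zero, cbDeriv_zero, cbDeriv_zero]
  | add_one o ih =>
      rw [cbDeriv_succ', cbDeriv_succ', cbDeriv_succ']
      exact (cbStep_mono ih).trans
        (cbStep_union_subset (cbDeriv_isClosed hA o) (cbDeriv_isClosed hB o))
  | limit o ho ih =>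
      intro x hx
      rw [cbDeriv_limit' _ ho, Set.mem_iInter₂] at hx
      by_cases hall : ∀ o' < o, x ∈ cbDeriv A o'
      · left
        rw [cbDeriv_limit' _ ho, Set.mem_iInter₂]
        exact hall
      · push_neg at hall
        obtain ⟨o₀, ho₀, hxo₀⟩ := hall
        right
        rw [cbDeriv_limit' _ ho, Set.mem_iInter₂]
        intro o' ho'
        have hm : max o' o₀ < o := max_lt ho' ho₀
        have := ih (max o' o₀) hm (hx _ hm)
        rcases this with h | h
        · exact absurd (cbDeriv_anti A (le_max_right o' o₀) h) hxo₀
        · exact cbDeriv_anti B (le_max_left o' o₀) h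

theorem cbDeriv_stab {X : Type*} [TopologicalSpace X] {A : Set X} {γ : Ordinal}
    (h : cbDeriv A (γ + 1) = cbDeriv A γ) :
    ∀ o : Ordinal, γ ≤ o → cbDeriv A o = cbDeriv A γ := by
  intro o
  induction o using Ordinal.limitRecOn with
  | zero => intro h0; rw [nonpos_iff_eq_zero.1 h0]
  | add_one o ih =>
      intro hle
      rcases eq_or_lt_of_le hle with rfl | hlt
      · rfl
      · have h1 : γ ≤ o := Order.le_of_lt_succ hlt
        rw [cbDeriv_succ', ih h1, ← cbDeriv_succ', h]
  | limit o ho ih =>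
      intro hle
      rcases eq_or_lt_of_le hle with rfl | hlt
      · rfl
      · apply subset_antisymm
        · exact cbDeriv_anti A hle
        · intro x hx
          rw [cbDeriv_limit' _ ho, Set.mem_iInter₂]
          intro o' ho'
          rcases le_total o' γ with h1 | h1
          · exact cbDeriv_anti A h1 hx
          · rw [ih o' ho' h1]; exact hx

universe v

theorem cbDeriv_stab_exists (A : Set ℝ) :
    ∃ γ : Ordinal.{v}, cbDeriv A (γ + 1) = cbDeriv A γ := by
  by_contra hcon
  push_neg at hcon
  have hinj : Function.Injective (fun o : Ordinal.{v} => cbDeriv A o) := by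
    have hsa : StrictAnti (fun o : Ordinal.{v} => cbDeriv A o) := by
      intro o₁ o₂ h12
      refine lt_of_le_of_ne ?_ ?_
      · exact cbDeriv_anti A h12.le
      · intro heq
        apply hcon o₁
        apply subset_antisymm
        · exact cbDeriv_anti A (le_of_lt (lt_add_one o₁))
        · have h1 : cbDeriv A o₂ ⊆ cbDeriv A (o₁ + 1) :=
            cbDeriv_anti A (Order.add_one_le_of_lt h12)
          have heq' : cbDeriv A o₂ = cbDeriv A o₁ := heq
          rw [← heq']; exact h1
    exact hsa.injective
  exact not_small_ordinal.{0} (small_of_injective (β := Set ℝ) hinj)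

end CBlemmas
theorem cbDeriv_subset_self {X : Type*} [TopologicalSpace X] (A : Set X) (o : Ordinal) :
    cbDeriv A o ⊆ A := by
  have := cbDeriv_anti A (zero_le : (0 : Ordinal) ≤ o)
  rwa [cbDeriv_zero] at this
section CBlemmas2

theorem cbRank_le_of_cbDeriv_eq_empty {X : Type*} [TopologicalSpace X] {A : Set X}
    {α : Ordinal} (h : cbDeriv A α = ∅) : cbRank A ≤ α := by
  refine csInf_le' ?_
  show cbDeriv A (α + 1) = cbDeriv A α
  rw [h, cbDeriv_succ', h, cbStep_empty]

universe v in
theorem cbDeriv_eq_empty_of_cbRank_le {A : Set ℝ} (hA : IsClosed A) (hcnt : A.Countable)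
    {α : Ordinal.{v}} (h : cbRank A ≤ α) : cbDeriv A α = ∅ := by
  have hS : {γ : Ordinal.{v} | cbDeriv A (γ + 1) = cbDeriv A γ}.Nonempty :=
    cbDeriv_stab_exists A
  have hmem := csInf_mem hS
  set γ₀ := sInf {γ : Ordinal.{v} | cbDeriv A (γ + 1) = cbDeriv A γ} with hγ₀
  have hstab : cbDeriv A α = cbDeriv A γ₀ := cbDeriv_stab hmem α h
  rw [hstab]
  by_contra hne0
  have hne : (cbDeriv A γ₀).Nonempty := Set.nonempty_iff_ne_empty.2 hne0
  have hperf : Perfect (cbDeriv A γ₀) := by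
    refine ⟨cbDeriv_isClosed hA γ₀, fun x hx => ?_⟩
    have : x ∈ cbDeriv A (γ₀ + 1) := by rw [hmem]; exact hx
    rw [cbDeriv_succ'] at this
    exact this.2
  obtain ⟨f, hrange, -, hinj⟩ := hperf.exists_nat_bool_injection hne
  have hc1 : (Set.range f).Countable :=
    hcnt.mono (hrange.trans (cbDeriv_subset_self A γ₀))
  have : Countable (ℕ → Bool) := by
    have := hc1.to_subtype
    exact Countable.of_equiv _ (Equiv.ofInjective f hinj).symm
  have hle : (Cardinal.mk (ℕ → Bool)) ≤ Cardinal.aleph0 := Cardinal.mk_le_aleph0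
  have heq : Cardinal.mk (ℕ → Bool) = 2 ^ Cardinal.aleph0 := by
    rw [← Cardinal.mk_bool, ← Cardinal.mk_nat, Cardinal.power_def]
  rw [heq] at hle
  exact absurd hle (not_le.2 (Cardinal.cantor _))

end CBlemmas2
section CBimage

variable {X Y : Type*} [TopologicalSpace X] [TopologicalSpace Y]

theorem accPt_image (e : X ≃ₜ Y) (A : Set X) (x : X) :
    AccPt (e x) (Filter.principal (e '' A)) ↔ AccPt x (Filter.principal A) := by
  unfold AccPt
  rw [← Filter.map_principal, ← Homeomorph.map_punctured_nhds_eq e x,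
    ← Filter.map_inf (e.injective)]
  exact Filter.map_neBot_iff _

theorem cbStep_image (e : X ≃ₜ Y) (A : Set X) : cbStep (e '' A) = e '' cbStep A := by
  ext y
  constructor
  · rintro ⟨⟨x, hxA, rfl⟩, hacc⟩
    exact ⟨x, ⟨hxA, (accPt_image e A x).1 hacc⟩, rfl⟩
  · rintro ⟨x, ⟨hxA, hacc⟩, rfl⟩
    exact ⟨⟨x, hxA, rfl⟩, (accPt_image e A x).2 hacc⟩

theorem cbDeriv_image (e : X ≃ₜ Y) (A : Set X) :
    ∀ o : Ordinal, cbDeriv (e '' A) o = e '' cbDeriv A o := by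
  intro o
  induction o using Ordinal.limitRecOn with
  | zero => rw [cbDeriv_zero, cbDeriv_zero]
  | add_one o ih => rw [cbDeriv_succ', cbDeriv_succ', ih, cbStep_image]
  | limit o ho ih =>
      rw [cbDeriv_limit' _ ho, cbDeriv_limit' _ ho]
      rw [Set.image_iInter₂ e.bijective]
      exact Set.iInter₂_congr ih

theorem cbRank_image (e : X ≃ₜ Y) (A : Set X) : cbRank (e '' A) = cbRank A := by
  unfold cbRank
  congr 1
  ext γ
  simp only [Set.mem_setOf_eq, cbDeriv_image e A]
  exact Set.image_eq_image e.injective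

end CBimage
namespace UTree

variable {C : Type} {z : C}

theorem exists_right_const (a : UTree C z) (t : ℝ) :
    ∃ ε > 0, ∀ u, t ≤ u → u ≤ t + ε → a.f u = a.f t := by
  by_cases ht : t < a.ρ
  · obtain ⟨ε, hε, h⟩ := a.piecewise_const t ht
    refine ⟨min ε ((a.ρ - t) / 2), lt_min hε (by linarith), fun u hu1 hu2 => ?_⟩
    have h1 : u ≤ t + ε := hu2.trans (add_le_add_right (min_le_left _ _) t)
    have h2 : u < a.ρ := by
      have := hu2.trans (add_le_add_right (min_le_right _ _) t)
      linarith
    exact h u hu1 h1 h2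
  · push_neg at ht
    refine ⟨1, one_pos, fun u hu1 _ => ?_⟩
    rw [a.apply_eq_of_ge u (ht.trans hu1), a.apply_eq_of_ge t ht]

/-- The defining set of `tau`. -/
theorem tau_set_nonempty (a : UTree C z) :
    {s | s ≤ a.ρ ∧ ∀ t, t < s → a.f t = z}.Nonempty := by
  obtain ⟨s, hs, h⟩ := a.eventually_zero
  exact ⟨s, hs, h⟩

theorem tau_set_bddAbove (a : UTree C z) :
    BddAbove {s | s ≤ a.ρ ∧ ∀ t, t < s → a.f t = z} :=
  ⟨a.ρ, fun _ ht => ht.1⟩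

theorem tau_le_rho (a : UTree C z) : a.tau ≤ a.ρ :=
  csSup_le (tau_set_nonempty a) fun _ ht => ht.1

theorem le_tau {a : UTree C z} {s : ℝ} (hs : s ≤ a.ρ) (h : ∀ t, t < s → a.f t = z) :
    s ≤ a.tau :=
  le_csSup (tau_set_bddAbove a) ⟨hs, h⟩

theorem apply_eq_zero_of_lt_tau (a : UTree C z) {t : ℝ} (ht : t < a.tau) : a.f t = z := by
  obtain ⟨s, hs, hts⟩ := exists_lt_of_lt_csSup (tau_set_nonempty a) ht
  exact hs.2 t hts

theorem apply_tau_ne_zero (a : UTree C z) (h : a.tau < a.ρ) : a.f a.tau ≠ z := by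
  intro hz
  obtain ⟨ε, hε, hconst⟩ := exists_right_const a a.tau
  have hmem : min (a.tau + ε) a.ρ ≤ a.tau := by
    apply le_tau (min_le_right _ _)
    intro t htlt
    rcases lt_or_ge t a.tau with h1 | h1
    · exact apply_eq_zero_of_lt_tau a h1
    · have h2 : t ≤ a.tau + ε := le_of_lt (lt_of_lt_of_le htlt (min_le_left _ _))
      rw [hconst t h1 h2, hz]
  have : a.tau < min (a.tau + ε) a.ρ := lt_min (by linarith) h
  linarith

theorem wedgeρ_cconst (r : ℝ) (y : UTree C z) :
    wedgeρ (cconst r : UTree C z) y = min r y.tau := by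
  apply le_antisymm
  · apply csSup_le (agreeSet_nonempty _ _)
    rintro s ⟨hs1, hs2⟩
    refine le_min (hs1.trans (min_le_left _ _)) (le_tau (hs1.trans (min_le_right _ _)) ?_)
    intro t ht
    exact (hs2 t ht).symm
  · apply le_wedgeρ
    constructor
    · exact le_min (min_le_left _ _) ((min_le_right _ _).trans (tau_le_rho y))
    · intro u hu
      exact (apply_eq_zero_of_lt_tau y (lt_of_lt_of_le hu (min_le_right _ _))).symm

theorem wedgeρ_eq_tau_of_tau_lt {y₁ y₂ : UTree C z} (h : y₁.tau < y₂.tau) :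
    wedgeρ y₁ y₂ = y₁.tau := by
  apply le_antisymm
  · apply csSup_le (agreeSet_nonempty _ _)
    rintro s ⟨hs1, hs2⟩
    by_contra hlt
    push_neg at hlt
    have hτρ : y₁.tau < y₁.ρ := lt_of_lt_of_le hlt (hs1.trans (min_le_left _ _))
    have h1 : y₁.f y₁.tau = y₂.f y₁.tau := hs2 _ hlt
    have h2 : y₂.f y₁.tau = z := apply_eq_zero_of_lt_tau y₂ h
    exact apply_tau_ne_zero y₁ hτρ (h1.trans h2)
  · apply le_wedgeρ
    refine ⟨le_min (tau_le_rho y₁) ((le_of_lt h).trans (tau_le_rho y₂)), fun u hu => ?_⟩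
    rw [apply_eq_zero_of_lt_tau y₁ hu, apply_eq_zero_of_lt_tau y₂ (hu.trans h)]

theorem tau_cconst (r : ℝ) : (cconst r : UTree C z).tau = r := by
  apply le_antisymm (tau_le_rho _)
  exact le_tau (le_refl r) fun _ _ => rfl

theorem badSet_subset_Iio (a : UTree C z) : badSet a ⊆ Set.Iio a.ρ := fun _ ht => ht.1

theorem pset_subset_Iic (a : UTree C z) : Pset a ⊆ Set.Iic a.ρ := by
  have h1 : badSet a ⊆ Set.Iic a.ρ := (badSet_subset_Iio a).trans Set.Iio_subset_Iic_self
  calc Pset a ⊆ closure (Set.Iic a.ρ) := closure_mono h1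
    _ = Set.Iic a.ρ := IsClosed.closure_eq isClosed_Iic

theorem pset_isClosed (a : UTree C z) : IsClosed (Pset a) := isClosed_closure

end UTree
theorem cbStep_singleton (p : ℝ) : cbStep ({p} : Set ℝ) = ∅ := by
  ext x
  simp only [Set.mem_empty_iff_false, iff_false]
  rintro ⟨hx, hacc⟩
  rw [accPt_iff_nhds] at hacc
  obtain ⟨y, ⟨-, hy⟩, hne⟩ := hacc Set.univ Filter.univ_mem
  rw [Set.mem_singleton_iff] at hy hx
  exact hne (hy.trans hx.symm)

theorem cbDeriv_singleton_eq_empty {p : ℝ} {α : Ordinal} (hα : 1 ≤ α) :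
    cbDeriv ({p} : Set ℝ) α = ∅ := by
  apply Set.eq_empty_of_subset_empty
  have h1 : cbDeriv ({p} : Set ℝ) α ⊆ cbDeriv ({p} : Set ℝ) 1 := cbDeriv_anti _ hα
  rwa [cbDeriv_one, cbStep_singleton] at h1

namespace UTree

variable {C : Type} {z : C}

theorem badSet_gap (a : UTree C z) {t : ℝ} (hlt : t < a.ρ) :
    ∃ ε > 0, ∀ u ∈ Set.Ioo t (t + ε), u ∉ badSet a := by
  obtain ⟨ε, hε, h⟩ := a.piecewise_const t hlt
  refine ⟨min ε ((a.ρ - t) / 2), lt_min hε (by linarith), ?_⟩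
  rintro u ⟨hu1, hu2⟩ ⟨huρ, hbad⟩
  obtain ⟨v, hv, w, hw, hvw⟩ := hbad (u - t) (by linarith)
  have hub : u ≤ t + ε := le_of_lt (lt_of_lt_of_le hu2 (add_le_add_right (min_le_left _ _) t))
  have huρ' : u < a.ρ := by
    have := lt_of_lt_of_le hu2 (add_le_add_right (min_le_right _ _) t)
    linarith
  have hv1 : a.f v = a.f t := by
    apply h v (by simpa using hv.1) (hv.2.trans hub) (lt_of_le_of_lt hv.2 huρ')
  have hw1 : a.f w = a.f t := by
    apply h w (by simpa using hw.1) (hw.2.trans hub) (lt_of_le_of_lt hw.2 huρ')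
  exact hvw (hv1.trans hw1.symm)

theorem pset_gap (a : UTree C z) {t : ℝ} (hlt : t < a.ρ) :
    ∃ ε > 0, ∀ u ∈ Set.Ioo t (t + ε), u ∉ Pset a := by
  obtain ⟨ε, hε, h⟩ := badSet_gap a hlt
  refine ⟨ε, hε, fun u hu hmem => ?_⟩
  have := mem_closure_iff_nhds.1 hmem (Set.Ioo t (t + ε)) (isOpen_Ioo.mem_nhds hu)
  obtain ⟨v, hv1, hv2⟩ := this
  exact h v hv1 hv2

theorem pset_countable (a : UTree C z) : (Pset a).Countable := by
  have key : ∀ t ∈ Pset a, ∃ q : ℚ, t < (q : ℝ) ∧ ∀ u ∈ Pset a, u ∈ Set.Ioo t (q : ℝ) → False := by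
    intro t ht
    rcases lt_or_ge t a.ρ with hlt | hge
    · obtain ⟨ε, hε, h⟩ := pset_gap a hlt
      obtain ⟨q, hq1, hq2⟩ := exists_rat_btwn (show t < t + ε by linarith)
      exact ⟨q, hq1, fun u hu ⟨h1, h2⟩ => h u ⟨h1, h2.trans hq2⟩ hu⟩
    · obtain ⟨q, hq1, hq2⟩ := exists_rat_btwn (show t < t + 1 by linarith)
      refine ⟨q, hq1, fun u hu ⟨h1, h2⟩ => ?_⟩
      have := pset_subset_Iic a hu
      have : u ≤ t := le_trans this hge
      linarith
  choose! g hg1 hg2 using key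
  have hinj : Set.InjOn g (Pset a) := by
    intro t₁ h₁ t₂ h₂ heq
    by_contra hne
    rcases lt_or_gt_of_ne hne with hlt | hlt
    · rcases lt_or_ge t₂ ((g t₁ : ℚ) : ℝ) with hc | hc
      · exact hg2 t₁ h₁ t₂ h₂ ⟨hlt, hc⟩
      · have := hg1 t₂ h₂
        rw [← heq] at this
        linarith
    · rcases lt_or_ge t₁ ((g t₂ : ℚ) : ℝ) with hc | hc
      · exact hg2 t₂ h₂ t₁ h₁ ⟨hlt, hc⟩
      · have := hg1 t₁ h₁
        rw [heq] at this
        linarith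
  exact Set.countable_of_injective_of_countable_image hinj (Set.to_countable _)

end UTree
namespace UTree

variable {C : Type} {z : C}

theorem comp_le_of_badSet_subset {y' y a b : UTree C z} {p : ℝ} {α : Ordinal}
    (hα : 1 ≤ α)
    (hsub : badSet y' ⊆ badSet y ∪ badSet a ∪ badSet b ∪ {p})
    (hy : comp y ≤ α) (ha : comp a ≤ α) (hb : comp b ≤ α) :
    comp y' ≤ α := by
  apply cbRank_le_of_cbDeriv_eq_empty
  have hP : Pset y' ⊆ Pset y ∪ Pset a ∪ Pset b ∪ {p} := by
    have h1 : Pset y' ⊆ closure (badSet y ∪ badSet a ∪ badSet b ∪ {p}) := closure_mono hsub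
    rwa [closure_union, closure_union, closure_union, closure_singleton] at h1
  have e1 : cbDeriv (Pset y) α = ∅ :=
    cbDeriv_eq_empty_of_cbRank_le (pset_isClosed y) (pset_countable y) hy
  have e2 : cbDeriv (Pset a) α = ∅ :=
    cbDeriv_eq_empty_of_cbRank_le (pset_isClosed a) (pset_countable a) ha
  have e3 : cbDeriv (Pset b) α = ∅ :=
    cbDeriv_eq_empty_of_cbRank_le (pset_isClosed b) (pset_countable b) hb
  have e4 : cbDeriv ({p} : Set ℝ) α = ∅ := cbDeriv_singleton_eq_empty hα
  have c1 : IsClosed (Pset y ∪ Pset a) := (pset_isClosed y).union (pset_isClosed a)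
  have c2 : IsClosed (Pset y ∪ Pset a ∪ Pset b) := c1.union (pset_isClosed b)
  have hD : cbDeriv (Pset y ∪ Pset a ∪ Pset b ∪ {p}) α ⊆ ∅ := by
    intro x hx
    rcases cbDeriv_union_subset c2 isClosed_singleton α hx with h | h
    · rcases cbDeriv_union_subset c1 (pset_isClosed b) α h with h | h
      · rcases cbDeriv_union_subset (pset_isClosed y) (pset_isClosed a) α h with h | h
        · rw [e1] at h; exact h
        · rw [e2] at h; exact h
      · rw [e3] at h; exact h
    · rw [e4] at h; exact h
  exact Set.eq_empty_of_subset_empty ((cbDeriv_mono hP α).trans hD)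

end UTree
namespace UTree

open scoped Classical

variable {C : Type} {z : C}

/-- Pointwise relabeling along the transpositions swapping `a.f t` and `b.f t`. -/
def relabel (a b y : UTree C z) : UTree C z where
  ρ := y.ρ
  f := fun t => if t < y.ρ then Equiv.swap (a.f t) (b.f t) (y.f t) else z
  apply_eq_of_ge := fun t ht => by
    rw [if_neg (not_lt.mpr ht)]
  eventually_zero := by
    obtain ⟨sy, hsy, hy⟩ := y.eventually_zero
    obtain ⟨sa, hsa, ha⟩ := a.eventually_zero
    obtain ⟨sb, hsb, hb⟩ := b.eventually_zero
    refine ⟨min sy (min sa sb), (min_le_left _ _).trans hsy, fun t ht => ?_⟩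
    by_cases h : t < y.ρ
    · rw [if_pos h, hy t (lt_of_lt_of_le ht (min_le_left _ _)),
        ha t (lt_of_lt_of_le ht ((min_le_right _ _).trans (min_le_left _ _))),
        hb t (lt_of_lt_of_le ht ((min_le_right _ _).trans (min_le_right _ _)))]
      rw [Equiv.swap_self]
      rfl
    · rw [if_neg h]
  piecewise_const := by
    intro t ht
    obtain ⟨εy, hεy, hy⟩ := y.piecewise_const t ht
    obtain ⟨εa, hεa, ha⟩ := exists_right_const a t
    obtain ⟨εb, hεb, hb⟩ := exists_right_const b t
    refine ⟨min εy (min εa εb), lt_min hεy (lt_min hεa hεb), fun u hu1 hu2 hu3 => ?_⟩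
    rw [if_pos hu3, if_pos ht]
    rw [hy u hu1 (hu2.trans (add_le_add_right (min_le_left _ _) t)) hu3,
      ha u hu1 (hu2.trans (add_le_add_right ((min_le_right _ _).trans (min_le_left _ _)) t)),
      hb u hu1 (hu2.trans (add_le_add_right ((min_le_right _ _).trans (min_le_right _ _)) t))]

theorem relabel_rho (a b y : UTree C z) : (relabel a b y).ρ = y.ρ := rfl

theorem relabel_f_of_lt (a b y : UTree C z) {t : ℝ} (ht : t < y.ρ) :
    (relabel a b y).f t = Equiv.swap (a.f t) (b.f t) (y.f t) := if_pos ht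

theorem relabel_involutive (a b y : UTree C z) : relabel a b (relabel a b y) = y := by
  refine ext' rfl (funext fun t => ?_)
  show (if t < y.ρ then _ else z) = y.f t
  by_cases h : t < y.ρ
  · rw [if_pos h, relabel_f_of_lt a b y h, Equiv.swap_apply_self]
  · rw [if_neg h, y.apply_eq_of_ge t (not_lt.mp h)]

theorem agreeSet_relabel (a b y₁ y₂ : UTree C z) :
    agreeSet (relabel a b y₁) (relabel a b y₂) = agreeSet y₁ y₂ := by
  ext s
  simp only [agreeSet, Set.mem_setOf_eq, relabel_rho]
  constructor
  · rintro ⟨h1, h2⟩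
    refine ⟨h1, fun u hu => ?_⟩
    have hu1 : u < y₁.ρ := lt_of_lt_of_le hu (h1.trans (min_le_left _ _))
    have hu2 : u < y₂.ρ := lt_of_lt_of_le hu (h1.trans (min_le_right _ _))
    have := h2 u hu
    rw [relabel_f_of_lt a b y₁ hu1, relabel_f_of_lt a b y₂ hu2] at this
    exact (Equiv.swap (a.f u) (b.f u)).injective this
  · rintro ⟨h1, h2⟩
    refine ⟨h1, fun u hu => ?_⟩
    have hu1 : u < y₁.ρ := lt_of_lt_of_le hu (h1.trans (min_le_left _ _))
    have hu2 : u < y₂.ρ := lt_of_lt_of_le hu (h1.trans (min_le_right _ _))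
    rw [relabel_f_of_lt a b y₁ hu1, relabel_f_of_lt a b y₂ hu2, h2 u hu]

theorem dist_relabel (a b y₁ y₂ : UTree C z) :
    dist (relabel a b y₁) (relabel a b y₂) = dist y₁ y₂ := by
  rw [dist_def, dist_def, relabel_rho, relabel_rho]
  have : wedgeρ (relabel a b y₁) (relabel a b y₂) = wedgeρ y₁ y₂ := by
    unfold wedgeρ
    rw [agreeSet_relabel]
  rw [this]

theorem relabel_apply_left {a b : UTree C z} (hab : a.ρ = b.ρ) :
    relabel a b a = b := by
  refine ext' hab (funext fun t => ?_)
  show (if t < a.ρ then _ else z) = b.f t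
  by_cases h : t < a.ρ
  · rw [if_pos h, Equiv.swap_apply_left]
  · rw [if_neg h, b.apply_eq_of_ge t (hab ▸ not_lt.mp h)]

theorem relabel_cconst {a b : UTree C z} {r : ℝ} (h : ∀ t, t < r → a.f t = b.f t) :
    relabel a b (cconst r) = (cconst r : UTree C z) := by
  refine ext' rfl (funext fun t => ?_)
  show (if t < r then Equiv.swap (a.f t) (b.f t) ((cconst r : UTree C z).f t) else z)
    = (cconst r : UTree C z).f t
  by_cases ht : t < r
  · rw [if_pos ht, h t ht, Equiv.swap_self]
    rfl
  · rw [if_neg ht]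
    rfl

theorem not_badSet_elim {a : UTree C z} {t : ℝ} (h : t ∉ badSet a) (hne : t ≠ a.ρ) :
    ∃ ε > 0, ∀ u ∈ Set.Icc (t - ε) t, a.f u = a.f t := by
  rcases lt_trichotomy t a.ρ with hlt | heq | hgt
  · simp only [badSet, Set.mem_setOf_eq, not_and, not_forall] at h
    obtain ⟨ε, hε, hgood⟩ := h hlt
    push_neg at hgood
    refine ⟨ε, hε, fun u hu => hgood u hu t ⟨by linarith [hu.1, hε.le], le_refl t⟩⟩
  · exact absurd heq hne
  · refine ⟨(t - a.ρ) / 2, by linarith, fun u hu => ?_⟩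
    have h1 : a.ρ ≤ u := by
      have := hu.1
      linarith
    rw [a.apply_eq_of_ge u h1, a.apply_eq_of_ge t (by linarith)]

theorem badSet_relabel_subset {a b : UTree C z} (hab : a.ρ = b.ρ) (y : UTree C z) :
    badSet (relabel a b y) ⊆ badSet y ∪ badSet a ∪ badSet b ∪ {a.ρ} := by
  intro t ht
  by_contra hcon
  simp only [Set.mem_union, Set.mem_singleton_iff, not_or] at hcon
  obtain ⟨⟨⟨hy, ha⟩, hb⟩, hρ⟩ := hcon
  obtain ⟨htρ, hbad⟩ := ht
  rw [relabel_rho] at htρ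
  obtain ⟨εa, hεa, hca⟩ := not_badSet_elim ha hρ
  obtain ⟨εb, hεb, hcb⟩ := not_badSet_elim hb (hab ▸ hρ)
  have hy' : ∃ ε > 0, ∀ u ∈ Set.Icc (t - ε) t, y.f u = y.f t := by
    simp only [badSet, Set.mem_setOf_eq, not_and, not_forall] at hy
    obtain ⟨ε, hε, hgood⟩ := hy htρ
    push_neg at hgood
    exact ⟨ε, hε, fun u hu => hgood u hu t ⟨by linarith [hu.1, hε.le], le_refl t⟩⟩
  obtain ⟨εy, hεy, hcy⟩ := hy'
  set ε := min εy (min εa εb) with hemin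
  obtain ⟨u, hu, v, hv, huv⟩ := hbad ε (lt_min hεy (lt_min hεa hεb))
  have hsub : Set.Icc (t - ε) t ⊆ Set.Icc (t - εy) t := by
    apply Set.Icc_subset_Icc_left
    have : ε ≤ εy := min_le_left _ _
    linarith
  have hsuba : Set.Icc (t - ε) t ⊆ Set.Icc (t - εa) t := by
    apply Set.Icc_subset_Icc_left
    have : ε ≤ εa := (min_le_right _ _).trans (min_le_left _ _)
    linarith
  have hsubb : Set.Icc (t - ε) t ⊆ Set.Icc (t - εb) t := by
    apply Set.Icc_subset_Icc_left
    have : ε ≤ εb := (min_le_right _ _).trans (min_le_right _ _)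
    linarith
  have key : ∀ w ∈ Set.Icc (t - ε) t, (relabel a b y).f w =
      Equiv.swap (a.f t) (b.f t) (y.f t) := by
    intro w hw
    have hwρ : w < y.ρ := lt_of_le_of_lt hw.2 htρ
    rw [relabel_f_of_lt a b y hwρ, hca w (hsuba hw), hcb w (hsubb hw), hcy w (hsub hw)]
  rw [key u hu, key v hv] at huv
  exact huv rfl

theorem comp_relabel_le {a b y : UTree C z} {α : Ordinal} (hab : a.ρ = b.ρ) (hα : 1 ≤ α)
    (ha : comp a ≤ α) (hb : comp b ≤ α) (hy : comp y ≤ α) :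
    comp (relabel a b y) ≤ α :=
  comp_le_of_badSet_subset hα (badSet_relabel_subset hab y) hy ha hb

end UTree
namespace UTree

variable {C : Type} {z : C}

/-- Reversal of the canonical line around `c_u`: slides each point's branch function so that
its branch point `τ` moves to the reflected position `2u - τ`. -/
def rev (u : ℝ) (y : UTree C z) : UTree C z where
  ρ := y.ρ + 2 * (u - y.tau)
  f := fun t => y.f (t - 2 * (u - y.tau))
  apply_eq_of_ge := fun t ht => y.apply_eq_of_ge _ (by linarith)
  eventually_zero := by
    refine ⟨y.tau + 2 * (u - y.tau), by linarith [tau_le_rho y], fun t ht => ?_⟩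
    exact apply_eq_zero_of_lt_tau y (by linarith)
  piecewise_const := by
    intro t ht
    obtain ⟨ε, hε, h⟩ := y.piecewise_const (t - 2 * (u - y.tau)) (by linarith)
    refine ⟨ε, hε, fun v hv1 hv2 hv3 => ?_⟩
    exact h (v - 2 * (u - y.tau)) (by linarith) (by linarith) (by linarith)

theorem rev_rho (u : ℝ) (y : UTree C z) : (rev u y).ρ = y.ρ + 2 * (u - y.tau) := rfl

theorem rev_f (u : ℝ) (y : UTree C z) (t : ℝ) :
    (rev u y).f t = y.f (t - 2 * (u - y.tau)) := rfl

theorem tau_rev (u : ℝ) (y : UTree C z) : (rev u y).tau = 2 * u - y.tau := by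
  apply le_antisymm
  · rcases eq_or_lt_of_le (tau_le_rho y) with heq | hlt
    · have := tau_le_rho (rev u y)
      rw [rev_rho, ← heq] at this
      linarith
    · by_contra hcon
      push_neg at hcon
      have h1 : (rev u y).f (2 * u - y.tau) = z := apply_eq_zero_of_lt_tau _ hcon
      rw [rev_f] at h1
      have h2 : 2 * u - y.tau - 2 * (u - y.tau) = y.tau := by ring
      rw [h2] at h1
      exact apply_tau_ne_zero y hlt h1
  · apply le_tau
    · rw [rev_rho]
      linarith [tau_le_rho y]
    · intro t ht
      rw [rev_f]
      exact apply_eq_zero_of_lt_tau y (by linarith)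

theorem rev_involutive (u : ℝ) (y : UTree C z) : rev u (rev u y) = y := by
  refine ext' ?_ (funext fun t => ?_)
  · rw [rev_rho, tau_rev, rev_rho]
    ring
  · rw [rev_f, tau_rev, rev_f]
    congr 1
    ring

theorem csSup_add_const {A : Set ℝ} (hne : A.Nonempty) (hbdd : BddAbove A) (r : ℝ) :
    sSup ((fun x => x + r) '' A) = sSup A + r := by
  apply le_antisymm
  · apply csSup_le (hne.image _)
    rintro x ⟨w, hw, rfl⟩
    have := le_csSup hbdd hw
    simp only []
    linarith
  · obtain ⟨M, hM⟩ := hbdd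
    have hbdd' : BddAbove ((fun x => x + r) '' A) := by
      refine ⟨M + r, ?_⟩
      rintro x ⟨w, hw, rfl⟩
      have := hM hw
      simp only [upperBounds, Set.mem_setOf_eq] at *
      linarith
    have : sSup A ≤ sSup ((fun x => x + r) '' A) - r := by
      apply csSup_le hne
      intro w hw
      have h2 : w + r ≤ sSup ((fun x => x + r) '' A) := le_csSup hbdd' ⟨w, hw, rfl⟩
      linarith
    linarith

theorem agreeSet_rev_of_tau_eq {y₁ y₂ : UTree C z} (u : ℝ) (h : y₁.tau = y₂.tau) :
    agreeSet (rev u y₁) (rev u y₂) = (fun x => x + 2 * (u - y₁.tau)) '' agreeSet y₁ y₂ := by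
  ext s
  simp only [agreeSet, Set.mem_setOf_eq, Set.mem_image, rev_rho]
  constructor
  · rintro ⟨h1, h2⟩
    refine ⟨s - 2 * (u - y₁.tau), ⟨?_, fun v hv => ?_⟩, by ring⟩
    · rw [le_min_iff] at h1 ⊢
      constructor
      · linarith [h1.1]
      · rw [← h] at h1
        linarith [h1.2]
    · have := h2 (v + 2 * (u - y₁.tau)) (by linarith)
      rw [rev_f, rev_f, ← h] at this
      simpa using this
  · rintro ⟨w, ⟨h1, h2⟩, rfl⟩
    constructor
    · rw [le_min_iff] at h1 ⊢
      constructor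
      · linarith [h1.1]
      · rw [← h]
        linarith [h1.2]
    · intro v hv
      rw [rev_f, rev_f, ← h]
      exact h2 _ (by linarith)

theorem wedgeρ_rev_of_tau_eq {y₁ y₂ : UTree C z} (u : ℝ) (h : y₁.tau = y₂.tau) :
    wedgeρ (rev u y₁) (rev u y₂) = wedgeρ y₁ y₂ + 2 * (u - y₁.tau) := by
  unfold wedgeρ
  rw [agreeSet_rev_of_tau_eq u h]
  exact csSup_add_const (agreeSet_nonempty _ _) (agreeSet_bddAbove _ _) _

theorem dist_rev (u : ℝ) (y₁ y₂ : UTree C z) : dist (rev u y₁) (rev u y₂) = dist y₁ y₂ := by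
  rcases lt_trichotomy y₁.tau y₂.tau with hlt | heq | hgt
  · have h1 : wedgeρ y₁ y₂ = y₁.tau := wedgeρ_eq_tau_of_tau_lt hlt
    have h2 : (rev u y₂).tau < (rev u y₁).tau := by
      rw [tau_rev, tau_rev]
      linarith
    have h3 : wedgeρ (rev u y₁) (rev u y₂) = 2 * u - y₂.tau := by
      rw [wedgeρ_comm, wedgeρ_eq_tau_of_tau_lt h2, tau_rev]
    rw [dist_def, dist_def, h1, h3, rev_rho, rev_rho]
    ring
  · rw [dist_def, dist_def, wedgeρ_rev_of_tau_eq u heq, rev_rho, rev_rho, heq]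
    ring
  · have h1 : wedgeρ y₁ y₂ = y₂.tau := by rw [wedgeρ_comm]; exact wedgeρ_eq_tau_of_tau_lt hgt
    have h2 : (rev u y₁).tau < (rev u y₂).tau := by
      rw [tau_rev, tau_rev]
      linarith
    have h3 : wedgeρ (rev u y₁) (rev u y₂) = 2 * u - y₁.tau := by
      rw [wedgeρ_eq_tau_of_tau_lt h2, tau_rev]
    rw [dist_def, dist_def, h1, h3, rev_rho, rev_rho]
    ring

theorem badSet_rev (u : ℝ) (y : UTree C z) :
    badSet (rev u y) = (fun x => x + 2 * (u - y.tau)) '' badSet y := by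
  ext t
  simp only [badSet, Set.mem_setOf_eq, Set.mem_image, rev_rho]
  constructor
  · rintro ⟨h1, h2⟩
    refine ⟨t - 2 * (u - y.tau), ⟨by linarith, fun ε hε => ?_⟩, by ring⟩
    obtain ⟨v, hv, w, hw, hvw⟩ := h2 ε hε
    rw [rev_f, rev_f] at hvw
    exact ⟨v - 2 * (u - y.tau), ⟨by linarith [hv.1], by linarith [hv.2]⟩,
      w - 2 * (u - y.tau), ⟨by linarith [hw.1], by linarith [hw.2]⟩, hvw⟩
  · rintro ⟨s, ⟨h1, h2⟩, rfl⟩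
    refine ⟨by linarith, fun ε hε => ?_⟩
    obtain ⟨v, hv, w, hw, hvw⟩ := h2 ε hε
    refine ⟨v + 2 * (u - y.tau), ⟨by linarith [hv.1], by linarith [hv.2]⟩,
      w + 2 * (u - y.tau), ⟨by linarith [hw.1], by linarith [hw.2]⟩, ?_⟩
    rw [rev_f, rev_f]
    simpa using hvw

theorem comp_rev (u : ℝ) (y : UTree C z) : comp (rev u y) = comp y := by
  show cbRank (Pset (rev u y)) = cbRank (Pset y)
  have he : Pset (rev u y) = (Homeomorph.addRight (2 * (u - y.tau))) '' Pset y := by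
    show closure (badSet (rev u y)) = _
    rw [badSet_rev]
    exact ((Homeomorph.addRight (2 * (u - y.tau))).image_closure (badSet y)).symm
  rw [he, cbRank_image]

theorem rev_cconst (u r : ℝ) : rev u (cconst r : UTree C z) = cconst (2 * u - r) := by
  refine ext' ?_ (funext fun t => rfl)
  rw [rev_rho, tau_cconst]
  show r + 2 * (u - r) = 2 * u - r
  ring

end UTree
namespace UTree

open scoped Classical

variable {C : Type} {z : C}

theorem mem_level_iff {α : Ordinal} {y : UTree C z} : y ∈ level z α ↔ comp y ≤ α := Iff.rfl

/-- Build an isometry of the level set from an involutive isometry of the tree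
preserving the level. -/
def levelIso (α : Ordinal) (F : UTree C z → UTree C z)
    (hinv : ∀ y, F (F y) = y)
    (hdist : ∀ y₁ y₂, dist (F y₁) (F y₂) = dist y₁ y₂)
    (hlevel : ∀ y, y ∈ level z α → F y ∈ level z α) :
    ↥(level z α) ≃ᵢ ↥(level z α) where
  toFun := fun x => ⟨F x.1, hlevel x.1 x.2⟩
  invFun := fun x => ⟨F x.1, hlevel x.1 x.2⟩
  left_inv := fun x => Subtype.ext (hinv x.1)
  right_inv := fun x => Subtype.ext (hinv x.1)
  isometry_toFun := Isometry.of_dist_eq fun x y => by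
    rw [Subtype.dist_eq, Subtype.dist_eq]
    exact hdist x.1 y.1

theorem levelIso_apply (α : Ordinal) (F : UTree C z → UTree C z)
    (hinv hdist hlevel) (x : ↥(level z α)) :
    (levelIso α F hinv hdist hlevel x : UTree C z) = F x.1 := rfl

theorem comp_cconst_le (r : ℝ) (α : Ordinal) : comp (cconst r : UTree C z) ≤ α := by
  rw [comp_cconst]
  exact zero_le

/-- The relabeling isometry of the level set. -/
def levelRelabel (α : Ordinal) (hα : 1 ≤ α) (a b : UTree C z) (hab : a.ρ = b.ρ)
    (ha : comp a ≤ α) (hb : comp b ≤ α) : ↥(level z α) ≃ᵢ ↥(level z α) :=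
  levelIso α (relabel a b) (relabel_involutive a b) (dist_relabel a b)
    (fun y hy => comp_relabel_le hab hα ha hb hy)

/-- The reversal isometry of the level set. -/
def levelRev (α : Ordinal) (u : ℝ) : ↥(level z α) ≃ᵢ ↥(level z α) :=
  levelIso α (rev u) (rev_involutive u) (dist_rev u)
    (fun y hy => by rw [mem_level_iff, comp_rev]; exact hy)

theorem dist_cconst_eq (r : ℝ) (y : UTree C z) :
    dist (cconst r : UTree C z) y = r + y.ρ - 2 * min r y.tau := by
  rw [dist_def, wedgeρ_cconst]
  rfl

theorem exists_iso_cconst_pair {α : Ordinal} (hα : 1 ≤ α) (x₁ x₂ : UTree C z)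
    (h₁ : x₁ ∈ level z α) (h₂ : x₂ ∈ level z α) :
    ∃ s : ℝ, ∃ ψ : ↥(level z α) ≃ᵢ ↥(level z α),
      (ψ ⟨x₁, h₁⟩ : UTree C z) = cconst s ∧
      (ψ ⟨x₂, h₂⟩ : UTree C z) = cconst (s + dist x₁ x₂) := by
  set d := dist x₁ x₂ with hd
  set r := x₁.ρ with hr
  have hcc : ∀ m : ℝ, (cconst m : UTree C z) ∈ level z α := fun m => cconst_mem_level α
  -- Step 1 : straighten x₁
  have hab1 : x₁.ρ = (cconst r : UTree C z).ρ := rfl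
  set Φ₁ := levelRelabel α hα x₁ (cconst r) hab1 h₁ (comp_cconst_le r α) with hΦ₁
  set y := relabel x₁ (cconst r) x₂ with hy
  have hΦ₁x₁ : (Φ₁ ⟨x₁, h₁⟩ : UTree C z) = cconst r := relabel_apply_left hab1
  have hΦ₁x₂ : (Φ₁ ⟨x₂, h₂⟩ : UTree C z) = y := rfl
  have hyl : y ∈ level z α := (Φ₁ ⟨x₂, h₂⟩).2
  have hdy : dist (cconst r : UTree C z) y = d := by
    rw [← relabel_apply_left hab1, hy, dist_relabel]
  rcases le_or_gt r y.tau with hcase | hcase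
  · -- x₂ branches above c_r
    have hfix : ∀ t, t < r → y.f t = (cconst y.ρ : UTree C z).f t := by
      intro t ht
      exact apply_eq_zero_of_lt_tau y (lt_of_lt_of_le ht hcase)
    set Φ₂ := levelRelabel α hα y (cconst y.ρ) rfl hyl (comp_cconst_le _ α) with hΦ₂
    have hyρ : y.ρ = r + d := by
      have := hdy
      rw [dist_cconst_eq, min_eq_left hcase] at this
      linarith
    refine ⟨r, Φ₁.trans Φ₂, ?_, ?_⟩
    · rw [IsometryEquiv.trans_apply]
      have : Φ₁ ⟨x₁, h₁⟩ = ⟨cconst r, hcc r⟩ := Subtype.ext hΦ₁x₁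
      rw [this]
      show relabel y (cconst y.ρ) (cconst r) = cconst r
      exact relabel_cconst hfix
    · rw [IsometryEquiv.trans_apply]
      have : Φ₁ ⟨x₂, h₂⟩ = ⟨y, hyl⟩ := Subtype.ext hΦ₁x₂
      rw [this]
      show relabel y (cconst y.ρ) y = cconst (r + d)
      rw [relabel_apply_left (a := y) (b := cconst y.ρ) rfl, hyρ]
  · -- x₂ branches below c_r : reverse first
    set Φ₂ := levelRev (z := z) α 0 with hΦ₂
    set y' := rev 0 y with hy'
    have hy'l : y' ∈ level z α := by rw [mem_level_iff, hy', comp_rev]; exact hyl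
    have hτ' : y'.tau = -y.tau := by rw [hy', tau_rev]; ring
    have hfix : ∀ t, t < -r → y'.f t = (cconst y'.ρ : UTree C z).f t := by
      intro t ht
      apply apply_eq_zero_of_lt_tau y'
      rw [hτ']
      linarith
    set Φ₃ := levelRelabel α hα y' (cconst y'.ρ) rfl hy'l (comp_cconst_le _ α) with hΦ₃
    have hdy' : dist (cconst (-r) : UTree C z) y' = d := by
      have : (cconst (-r) : UTree C z) = rev 0 (cconst r) := by
        rw [rev_cconst]; congr 1; ring
      rw [this, hy', dist_rev, hdy]
    have hy'ρ : y'.ρ = -r + d := by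
      have h2 : min (-r) y'.tau = -r := by
        apply min_eq_left
        rw [hτ']
        linarith
      rw [dist_cconst_eq, h2] at hdy'
      linarith
    refine ⟨-r, (Φ₁.trans Φ₂).trans Φ₃, ?_, ?_⟩
    · rw [IsometryEquiv.trans_apply, IsometryEquiv.trans_apply]
      have e1 : Φ₁ ⟨x₁, h₁⟩ = ⟨cconst r, hcc r⟩ := Subtype.ext hΦ₁x₁
      rw [e1]
      have e2 : Φ₂ ⟨cconst r, hcc r⟩ = ⟨cconst (-r), hcc (-r)⟩ := by
        apply Subtype.ext
        show rev 0 (cconst r) = cconst (-r)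
        rw [rev_cconst]; congr 1; ring
      rw [e2]
      show relabel y' (cconst y'.ρ) (cconst (-r)) = cconst (-r)
      exact relabel_cconst hfix
    · rw [IsometryEquiv.trans_apply, IsometryEquiv.trans_apply]
      have e1 : Φ₁ ⟨x₂, h₂⟩ = ⟨y, hyl⟩ := Subtype.ext hΦ₁x₂
      rw [e1]
      have e2 : Φ₂ ⟨y, hyl⟩ = ⟨y', hy'l⟩ := rfl
      rw [e2]
      show relabel y' (cconst y'.ρ) y' = cconst (-r + d)
      rw [relabel_apply_left (a := y') (b := cconst y'.ρ) rfl, hy'ρ]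

theorem exists_iso_canonical {α : Ordinal} (hα : 1 ≤ α) (x₁ x₂ : UTree C z)
    (h₁ : x₁ ∈ level z α) (h₂ : x₂ ∈ level z α) :
    ∃ ψ : ↥(level z α) ≃ᵢ ↥(level z α),
      (ψ ⟨x₁, h₁⟩ : UTree C z) = cconst 0 ∧
      (ψ ⟨x₂, h₂⟩ : UTree C z) = cconst (dist x₁ x₂) := by
  obtain ⟨s, ψ₀, hs1, hs2⟩ := exists_iso_cconst_pair hα x₁ x₂ h₁ h₂
  set d := dist x₁ x₂ with hd
  have hcc : ∀ m : ℝ, (cconst m : UTree C z) ∈ level z α := fun m => cconst_mem_level α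
  set Φa := levelRev (z := z) α 0 with hΦa
  set Φb := levelRev (z := z) α (-s/2) with hΦb
  refine ⟨(ψ₀.trans Φa).trans Φb, ?_, ?_⟩
  · rw [IsometryEquiv.trans_apply, IsometryEquiv.trans_apply]
    have e1 : ψ₀ ⟨x₁, h₁⟩ = ⟨cconst s, hcc s⟩ := Subtype.ext hs1
    rw [e1]
    have e2 : Φa ⟨cconst s, hcc s⟩ = ⟨cconst (-s), hcc (-s)⟩ := by
      apply Subtype.ext
      show rev 0 (cconst s) = cconst (-s)
      rw [rev_cconst]; congr 1; ring
    rw [e2]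
    show rev (-s/2) (cconst (-s)) = cconst 0
    rw [rev_cconst]
    congr 1
    ring
  · rw [IsometryEquiv.trans_apply, IsometryEquiv.trans_apply]
    have e1 : ψ₀ ⟨x₂, h₂⟩ = ⟨cconst (s + d), hcc (s + d)⟩ := Subtype.ext hs2
    rw [e1]
    have e2 : Φa ⟨cconst (s + d), hcc (s + d)⟩ = ⟨cconst (-(s + d)), hcc (-(s + d))⟩ := by
      apply Subtype.ext
      show rev 0 (cconst (s + d)) = cconst (-(s + d))
      rw [rev_cconst]; congr 1; ring
    rw [e2]
    show rev (-s/2) (cconst (-(s + d))) = cconst d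
    rw [rev_cconst]
    congr 1
    ring

end UTree
/-- `T_κ^{[α]}` is 2-point homogeneous: any pair of points can be sent to any other pair at
the same distance by an isometry; in particular `T_κ^{[α]}` is homogeneous. -/
theorem stmt9 (κ : Cardinal) (hκ : 3 ≤ κ) (C : Type) (z : C) (hC : IsLabelSet κ C)
    (α : Ordinal) (hα1 : 1 ≤ α) (hαc : IsCountableOrdinal α)
    (a₁ a₂ b₁ b₂ : ↥(UTree.level z α)) (h : dist a₁ a₂ = dist b₁ b₂) :
    (∃ ψ : ↥(UTree.level z α) ≃ᵢ ↥(UTree.level z α), ψ a₁ = b₁ ∧ ψ a₂ = b₂) ∧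
    (∀ x y : ↥(UTree.level z α), ∃ ψ : ↥(UTree.level z α) ≃ᵢ ↥(UTree.level z α), ψ x = y) := by
  have hd : dist (a₁ : UTree C z) (a₂ : UTree C z) = dist (b₁ : UTree C z) (b₂ : UTree C z) := by
    rw [← Subtype.dist_eq, ← Subtype.dist_eq]
    exact h
  constructor
  · obtain ⟨ψa, ha1, ha2⟩ := UTree.exists_iso_canonical hα1 a₁.1 a₂.1 a₁.2 a₂.2
    obtain ⟨ψb, hb1, hb2⟩ := UTree.exists_iso_canonical hα1 b₁.1 b₂.1 b₁.2 b₂.2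
    refine ⟨ψa.trans ψb.symm, ?_, ?_⟩
    · rw [IsometryEquiv.trans_apply]
      have e1 : ψa a₁ = ψb b₁ := by
        apply Subtype.ext
        rw [show a₁ = ⟨a₁.1, a₁.2⟩ from rfl, show b₁ = ⟨b₁.1, b₁.2⟩ from rfl]
        rw [ha1, hb1]
      rw [e1, IsometryEquiv.symm_apply_apply]
    · rw [IsometryEquiv.trans_apply]
      have e2 : ψa a₂ = ψb b₂ := by
        apply Subtype.ext
        rw [show a₂ = ⟨a₂.1, a₂.2⟩ from rfl, show b₂ = ⟨b₂.1, b₂.2⟩ from rfl]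
        rw [ha2, hb2, hd]
      rw [e2, IsometryEquiv.symm_apply_apply]
  · intro x y
    obtain ⟨ψx, hx1, -⟩ := UTree.exists_iso_canonical hα1 x.1 x.1 x.2 x.2
    obtain ⟨ψy, hy1, -⟩ := UTree.exists_iso_canonical hα1 y.1 y.1 y.2 y.2
    refine ⟨ψx.trans ψy.symm, ?_⟩
    rw [IsometryEquiv.trans_apply]
    have e1 : ψx x = ψy y := by
      apply Subtype.ext
      rw [show x = ⟨x.1, x.2⟩ from rfl, show y = ⟨y.1, y.2⟩ from rfl]
      rw [hx1, hy1]
    rw [e1, IsometryEquiv.symm_apply_apply]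

end
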